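/- Let d ≥ 1 be an integer and let λ > 0. If u is a tempered distribution on ℝ^d (i.e. a continuous linear functional on the Schwartz space S(ℝ^d)) such that u(Δψ) = λ·u(ψ) for every Schwartz function ψ ∈ S(ℝ^d), where Δψ = Σ_{i=1}^d ∂²ψ/∂x_i², then u = 0. -/

import Mathlib

open SchwartzMap

/-- The pointwise Laplacian of a function on `ℝ^d`: the sum of the second derivatives
in the coordinate directions. -/
noncomputable def laplacianE {d : ℕ} (f : EuclideanSpace ℝ (Fin d) → ℝ)
    (x : EuclideanSpace ℝ (Fin d)) : ℝ :=
  ∑ i : Fin d, iteratedFDeriv ℝ 2 f x ![EuclideanSpace.single i 1, EuclideanSpace.single i 1]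

open MeasureTheory Real Complex Filter
open scoped FourierTransform RealInnerProductSpace

attribute [local instance 101] secondCountableTopologyEither_of_left

namespace LapAux

variable {d : ℕ}

/-- Postcomposition of a Schwartz map with a continuous linear map. -/
def compL {E F G : Type*} [NormedAddCommGroup E] [NormedSpace ℝ E]
    [NormedAddCommGroup F] [NormedSpace ℝ F] [NormedAddCommGroup G] [NormedSpace ℝ G]
    (g : F →L[ℝ] G) (f : SchwartzMap E F) : SchwartzMap E G where
  toFun := fun x => g (f x)
  smooth' := g.contDiff.comp f.smooth'
  decay' := by
    intro k n
    obtain ⟨C, hC⟩ := f.decay' k n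
    refine ⟨‖g‖ * C, fun x => ?_⟩
    have h1 : iteratedFDeriv ℝ n (fun y => g (f y)) x
        = g.compContinuousMultilinearMap (iteratedFDeriv ℝ n (⇑f) x) :=
      g.iteratedFDeriv_comp_left (f.smooth'.contDiffAt (x := x)) (by exact_mod_cast le_top)
    rw [h1]
    calc ‖x‖ ^ k * ‖g.compContinuousMultilinearMap (iteratedFDeriv ℝ n (⇑f) x)‖
        ≤ ‖x‖ ^ k * (‖g‖ * ‖iteratedFDeriv ℝ n (⇑f) x‖) := by
          gcongr
          exact g.norm_compContinuousMultilinearMap_le _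
      _ = ‖g‖ * (‖x‖ ^ k * ‖iteratedFDeriv ℝ n (⇑f) x‖) := by ring
      _ ≤ ‖g‖ * C := by gcongr; exact hC x

@[simp] lemma compL_apply {E F G : Type*} [NormedAddCommGroup E] [NormedSpace ℝ E]
    [NormedAddCommGroup F] [NormedSpace ℝ F] [NormedAddCommGroup G] [NormedSpace ℝ G]
    (g : F →L[ℝ] G) (f : SchwartzMap E F) (x : E) : compL g f x = g (f x) := rfl


/-- The Laplacian as a map on Schwartz space. -/
noncomputable def lapS {F : Type*} [NormedAddCommGroup F] [NormedSpace ℝ F]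
    (f : SchwartzMap (EuclideanSpace ℝ (Fin d)) F) : SchwartzMap (EuclideanSpace ℝ (Fin d)) F :=
  ∑ i : Fin d, LineDeriv.iteratedLineDerivOp ![EuclideanSpace.single i (1:ℝ), EuclideanSpace.single i 1] f

lemma lapS_apply {F : Type*} [NormedAddCommGroup F] [NormedSpace ℝ F]
    (f : SchwartzMap (EuclideanSpace ℝ (Fin d)) F) (x : EuclideanSpace ℝ (Fin d)) :
    lapS f x = ∑ i : Fin d, iteratedFDeriv ℝ 2 (⇑f) x
      ![EuclideanSpace.single i 1, EuclideanSpace.single i 1] := by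
  have h : ⇑(lapS f) = ∑ i : Fin d,
      ⇑(LineDeriv.iteratedLineDerivOp ![EuclideanSpace.single i (1:ℝ), EuclideanSpace.single i 1] f) :=
    map_sum (FunLike.coeAddMonoidHom (SchwartzMap (EuclideanSpace ℝ (Fin d)) F) (EuclideanSpace ℝ (Fin d)) F) _ _
  rw [show lapS f x = (⇑(lapS f)) x from rfl, h]
  simp only [Finset.sum_apply]
  exact Finset.sum_congr rfl fun i _ => SchwartzMap.iteratedLineDerivOp_eq_iteratedFDeriv

lemma iteratedDeriv_inv_eq (n : ℕ) : ∀ y : ℝ, y ≠ 0 →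
    iteratedDeriv n (fun t : ℝ => t⁻¹) y = ((-1)^n * (n.factorial : ℝ)) * y ^ (-(n:ℤ)-1) := by
  induction n with
  | zero => intro y hy; simp [zpow_neg, zpow_one]
  | succ n ih =>
    intro y hy
    have hev : (iteratedDeriv n fun t : ℝ => t⁻¹)
        =ᶠ[nhds y] fun t : ℝ => ((-1)^n * (n.factorial : ℝ)) * t ^ (-(n:ℤ)-1) := by
      filter_upwards [isOpen_compl_singleton.mem_nhds (by simpa using hy)] with t ht
      exact ih t (by simpa using ht)
    rw [iteratedDeriv_succ, hev.deriv_eq]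
    rw [deriv_const_mul _ (differentiableAt_zpow.2 (Or.inl hy)), deriv_zpow]
    have hexp : (-(n:ℤ)-1) - 1 = -((n+1 : ℕ):ℤ)-1 := by push_cast; ring
    rw [hexp]
    rw [show ((-1:ℝ))^(n+1) = (-1)^n * (-1) from pow_succ _ _]
    push_cast [Nat.factorial_succ]
    ring


section Temperate

variable {V : Type*} [NormedAddCommGroup V] [InnerProductSpace ℝ V]

lemma fderiv_quadratic (lam : ℝ) :
    fderiv ℝ (fun y : V => (4*π^2) * ‖y‖^2 + lam) = ⇑((8*π^2 : ℝ) • innerSL ℝ (E := V)) := by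
  funext y
  have h1 : HasFDerivAt (fun y : V => (4*π^2) * ‖y‖^2 + lam)
      (((8*π^2 : ℝ) • innerSL ℝ (E := V)) y) y := by
    have h2 := ((hasStrictFDerivAt_norm_sq y).hasFDerivAt.const_mul ((4:ℝ)*π^2)).add_const lam
    refine h2.congr_fderiv ?_
    ext v
    simp only [ContinuousLinearMap.coe_smul', Pi.smul_apply, ContinuousLinearMap.smul_apply,
      smul_eq_mul, innerSL_apply_apply]
    ring
  exact h1.fderiv

lemma norm_iteratedFDeriv_quadratic (lam : ℝ) (n : ℕ) (hn : 1 ≤ n) (x : V) :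
    ‖iteratedFDeriv ℝ n (fun y : V => (4*π^2) * ‖y‖^2 + lam) x‖ ≤ (8*π^2*(1+‖x‖)+1)^n := by
  set G : V →L[ℝ] V →L[ℝ] ℝ := (8*π^2 : ℝ) • innerSL ℝ (E := V) with hG
  have hpos : (0:ℝ) ≤ 8*π^2*(1+‖x‖) := by positivity
  have hxp : (0:ℝ) ≤ 8*π^2*‖x‖ := by positivity
  have hexp : 8*π^2*(1+‖x‖)+1 = 8*π^2 + 8*π^2*‖x‖ + 1 := by ring
  have hD1 : (1:ℝ) ≤ 8*π^2*(1+‖x‖)+1 := by linarith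
  have hGx : ∀ y : V, ‖G y‖ = 8*π^2*‖y‖ := by
    intro y
    rw [hG, ContinuousLinearMap.smul_apply, norm_smul, innerSL_apply_norm, Real.norm_eq_abs,
      _root_.abs_of_nonneg (by positivity : (0:ℝ) ≤ 8*π^2)]
  obtain ⟨m, rfl⟩ : ∃ m, n = m + 1 := ⟨n-1, by omega⟩
  rw [← norm_iteratedFDeriv_fderiv, fderiv_quadratic lam]
  match m with
  | 0 =>
    rw [norm_iteratedFDeriv_zero, pow_one]
    rw [show (⇑G : V → V →L[ℝ] ℝ) x = G x from rfl] at *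
    rw [hGx x]
    have h2 : (0:ℝ) ≤ π^2 := sq_nonneg π
    linarith
  | 1 =>
    rw [← norm_iteratedFDeriv_fderiv]
    have hf : fderiv ℝ (⇑G) = fun _ => G := by
      funext y; exact G.fderiv
    rw [hf, norm_iteratedFDeriv_zero]
    have hGnorm : ‖G‖ ≤ 8*π^2 :=
      G.opNorm_le_bound (by positivity) (fun y => le_of_eq (hGx y))
    have h8 : (8*π^2 : ℝ) ≤ 8*π^2*(1+‖x‖)+1 := by linarith
    calc ‖G‖ ≤ 8*π^2 := hGnorm
      _ ≤ 8*π^2*(1+‖x‖)+1 := h8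
      _ ≤ (8*π^2*(1+‖x‖)+1)^2 := le_self_pow₀ hD1 two_ne_zero
  | (k+2) =>
    rw [← norm_iteratedFDeriv_fderiv]
    have hf : fderiv ℝ (⇑G) = fun _ => G := by
      funext y; exact G.fderiv
    rw [hf, iteratedFDeriv_const_of_ne (by omega : k + 1 ≠ 0)]
    simp only [Pi.zero_apply, norm_zero]
    positivity

lemma hasTemperateGrowth_inv_quadratic (lam : ℝ) (hlam : 0 < lam) :
    Function.HasTemperateGrowth (fun x : V => ((4*π^2) * ‖x‖^2 + lam)⁻¹) := by
  set q : V → ℝ := fun x => (4*π^2) * ‖x‖^2 + lam with hq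
  have hqlam : ∀ x, lam ≤ q x := by
    intro x
    have h0 : (0:ℝ) ≤ (4*π^2) * ‖x‖^2 := by positivity
    simp only [hq]
    linarith
  have hqpos : ∀ x, 0 < q x := fun x => hlam.trans_le (hqlam x)
  have hqne : ∀ x, q x ≠ 0 := fun x => (hqpos x).ne'
  have hqsmooth : ContDiff ℝ (⊤ : ℕ∞) q :=
    (contDiff_const.mul (contDiff_norm_sq ℝ)).add contDiff_const
  constructor
  · exact hqsmooth.inv hqne
  · intro n
    refine ⟨n, (n.factorial : ℝ) * ((n.factorial : ℝ) * (max 1 lam⁻¹)^(n+1)) * (8*π^2+1)^n,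
      fun x => ?_⟩
    have hmax1 : (1:ℝ) ≤ max 1 lam⁻¹ := le_max_left _ _
    have key := norm_iteratedFDerivWithin_comp_le (𝕜 := ℝ) (g := fun y : ℝ => y⁻¹) (f := q)
      (n := n) (s := Set.univ) (t := {(0:ℝ)}ᶜ) (N := (n : WithTop ℕ∞)) (x := x)
      (C := (n.factorial : ℝ) * (max 1 lam⁻¹)^(n+1)) (D := 8*π^2*(1+‖x‖)+1)
      (contDiffOn_inv ℝ)
      ((hqsmooth.of_le (by exact_mod_cast le_top)).contDiffOn)
      le_rfl
      isOpen_compl_singleton.uniqueDiffOn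
      uniqueDiffOn_univ
      (fun y _ => by simpa using hqne y)
      (Set.mem_univ x)
      ?_ ?_
    · rw [iteratedFDerivWithin_univ] at key
      have hcomp : ((fun y : ℝ => y⁻¹) ∘ q) = fun x : V => ((4*π^2) * ‖x‖^2 + lam)⁻¹ := rfl
      rw [hcomp] at key
      refine key.trans ?_
      have hDle : 8*π^2*(1+‖x‖)+1 ≤ (8*π^2+1)*(1+‖x‖) := by
        have hr : (8*π^2+1)*(1+‖x‖) = 8*π^2*(1+‖x‖)+1+‖x‖ := by ring
        have := norm_nonneg x
        linarith
      have hDpos : (0:ℝ) ≤ 8*π^2*(1+‖x‖)+1 := by positivity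
      calc (n.factorial : ℝ) * ((n.factorial : ℝ) * (max 1 lam⁻¹)^(n+1)) * (8*π^2*(1+‖x‖)+1)^n
          ≤ (n.factorial : ℝ) * ((n.factorial : ℝ) * (max 1 lam⁻¹)^(n+1))
              * ((8*π^2+1)*(1+‖x‖))^n := by
            gcongr
          _ = (n.factorial : ℝ) * ((n.factorial : ℝ) * (max 1 lam⁻¹)^(n+1)) * (8*π^2+1)^n
              * (1+‖x‖)^n := by rw [mul_pow]; ring
    · -- bound on derivatives of the inverse on the target set
      intro i hi
      have hmem : q x ∈ ({(0:ℝ)}ᶜ : Set ℝ) := by simpa using hqne x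
      rw [iteratedFDerivWithin_of_isOpen i isOpen_compl_singleton hmem]
      rw [norm_iteratedFDeriv_eq_norm_iteratedDeriv]
      rw [iteratedDeriv_inv_eq i (q x) (hqne x)]
      rw [Real.norm_eq_abs, abs_mul, abs_mul, _root_.abs_pow, abs_neg, abs_one, one_pow, one_mul]
      have h1 : |(i.factorial : ℝ)| = (i.factorial : ℝ) := by
        rw [_root_.abs_of_nonneg]; positivity
      rw [h1]
      have h2 : |(q x) ^ (-(i:ℤ)-1)| = ((q x)⁻¹) ^ (i+1) := by
        rw [_root_.abs_of_nonneg (zpow_nonneg (hqpos x).le _),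
          show (-(i:ℤ)-1) = -(((i+1:ℕ)):ℤ) by push_cast; ring,
          zpow_neg, zpow_natCast, inv_pow]
      rw [h2]
      have h3 : ((q x)⁻¹) ^ (i+1) ≤ (max 1 lam⁻¹)^(n+1) := by
        have hinv : (q x)⁻¹ ≤ max 1 lam⁻¹ :=
          le_trans (inv_anti₀ hlam (hqlam x)) (le_max_right _ _)
        have hinv0 : (0:ℝ) ≤ (q x)⁻¹ := by positivity
        calc ((q x)⁻¹) ^ (i+1) ≤ (max 1 lam⁻¹)^(i+1) := pow_le_pow_left₀ hinv0 hinv _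
          _ ≤ (max 1 lam⁻¹)^(n+1) := pow_le_pow_right₀ hmax1 (by omega)
      have h4 : (i.factorial : ℝ) ≤ (n.factorial : ℝ) := by
        exact_mod_cast Nat.factorial_le (by exact_mod_cast hi)
      exact mul_le_mul h4 h3 (by positivity) (by positivity)
    · -- bound on derivatives of q
      intro i h1i hin
      rw [iteratedFDerivWithin_univ]
      exact norm_iteratedFDeriv_quadratic lam i h1i x

end Temperate


section Integrable

variable {F : Type*} [NormedAddCommGroup F] [NormedSpace ℝ F]

lemma integrable_iteratedFDeriv_le_two (f : SchwartzMap (EuclideanSpace ℝ (Fin d)) F)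
    {n : ℕ} (hn : n ≤ 2) :
    Integrable (iteratedFDeriv ℝ n (⇑f)) (volume : Measure (EuclideanSpace ℝ (Fin d))) := by
  have hmeas : AEStronglyMeasurable (iteratedFDeriv ℝ n (⇑f))
      (volume : Measure (EuclideanSpace ℝ (Fin d))) :=
    (f.smooth'.continuous_iteratedFDeriv (by exact_mod_cast le_top)).aestronglyMeasurable
  interval_cases n
  · refine Integrable.mono' f.integrable.norm hmeas (Filter.Eventually.of_forall fun x => ?_)
    rw [norm_iteratedFDeriv_zero]
  · refine Integrable.mono' (fderivCLM ℝ _ _ f).integrable.norm hmeas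
      (Filter.Eventually.of_forall fun x => ?_)
    rw [show (1:ℕ) = 0 + 1 from rfl, ← norm_iteratedFDeriv_fderiv, norm_iteratedFDeriv_zero]
    exact le_of_eq rfl
  · refine Integrable.mono' (fderivCLM ℝ _ _ (fderivCLM ℝ _ _ f)).integrable.norm hmeas
      (Filter.Eventually.of_forall fun x => ?_)
    rw [show (2:ℕ) = 0 + 1 + 1 from rfl, ← norm_iteratedFDeriv_fderiv,
      ← norm_iteratedFDeriv_fderiv, norm_iteratedFDeriv_zero]
    have hco : fderiv ℝ (⇑f) = ⇑(fderivCLM ℝ _ _ f) := rfl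
    rw [hco]
    exact le_of_eq rfl

end Integrable


section Fourier

lemma fourier_lapS (f : SchwartzMap (EuclideanSpace ℝ (Fin d)) ℂ) (ξ : EuclideanSpace ℝ (Fin d)) :
    𝓕 ⇑(lapS f) ξ = ((-(4*π^2) * ‖ξ‖^2 : ℝ)) • 𝓕 ⇑f ξ := by
  have hint2 : Integrable (iteratedFDeriv ℝ 2 (⇑f))
      (volume : Measure (EuclideanSpace ℝ (Fin d))) :=
    integrable_iteratedFDeriv_le_two f le_rfl
  have hlap : 𝓕 (iteratedFDeriv ℝ 2 (⇑f))
      = fun w => VectorFourier.fourierPowSMulRight (-innerSL ℝ) (𝓕 ⇑f) w 2 :=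
    Real.fourier_iteratedFDeriv (N := 2) (f.smooth 2)
      (fun n hn => integrable_iteratedFDeriv_le_two f (by exact_mod_cast hn)) le_rfl
  have hsum : ∑ i : Fin d, (ξ i)^2 = ‖ξ‖^2 := by
    rw [← real_inner_self_eq_norm_sq, PiLp.inner_apply]
    refine Finset.sum_congr rfl fun i _ => ?_
    simp [RCLike.inner_apply, pow_two]
  have hc : ((-(2 * (π:ℂ) * Complex.I))^2) = ((-(4*π^2) : ℝ) : ℂ) := by
    rw [show (-(2 * (π:ℂ) * Complex.I))^2 = (2*(π:ℂ))^2 * Complex.I^2 by ring, Complex.I_sq]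
    push_cast
    ring
  calc 𝓕 ⇑(lapS f) ξ
      = ∫ v, 𝐞 (-⟪v, ξ⟫) • (∑ i : Fin d, iteratedFDeriv ℝ 2 (⇑f) v
          ![EuclideanSpace.single i 1, EuclideanSpace.single i 1]) := by
        rw [Real.fourier_eq]
        congr 1
        funext v
        rw [lapS_apply]
    _ = ∑ i : Fin d, ∫ v, 𝐞 (-⟪v, ξ⟫) • iteratedFDeriv ℝ 2 (⇑f) v
          ![EuclideanSpace.single i 1, EuclideanSpace.single i 1] := by
        rw [← integral_finset_sum]
        · congr 1
          funext v
          rw [Finset.smul_sum]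
        · intro i _
          have heq : (fun x => iteratedFDeriv ℝ 2 (⇑f) x
              ![EuclideanSpace.single i 1, EuclideanSpace.single i 1])
              = ⇑(LineDeriv.iteratedLineDerivOp ![EuclideanSpace.single i (1:ℝ), EuclideanSpace.single i 1] f) :=
            funext fun x => SchwartzMap.iteratedLineDerivOp_eq_iteratedFDeriv.symm
          have hInt : Integrable (fun x => iteratedFDeriv ℝ 2 (⇑f) x
              ![EuclideanSpace.single i 1, EuclideanSpace.single i 1])
              (volume : Measure (EuclideanSpace ℝ (Fin d))) := by
            rw [heq]
            exact (LineDeriv.iteratedLineDerivOp _ f).integrable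
          exact (Real.fourierIntegral_convergent_iff ξ).2 hInt
    _ = ∑ i : Fin d, (𝓕 (iteratedFDeriv ℝ 2 (⇑f)) ξ)
          ![EuclideanSpace.single i 1, EuclideanSpace.single i 1] := by
        refine Finset.sum_congr rfl fun i _ => ?_
        rw [Real.fourier_continuousMultilinearMap_apply hint2]
        rw [Real.fourier_eq]
    _ = ∑ i : Fin d, ((ξ i)^2 : ℝ) • (((-(2 * (π:ℂ) * Complex.I))^2) • 𝓕 ⇑f ξ) := by
        rw [hlap]
        refine Finset.sum_congr rfl fun i _ => ?_
        rw [VectorFourier.fourierPowSMulRight_apply]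
        rw [smul_comm]
        congr 1
        have hinner : (innerSL ℝ ξ) (EuclideanSpace.single i (1:ℝ)) = ξ i := by
          simp [EuclideanSpace.inner_single_right]
        rw [Fin.prod_univ_two]
        simp only [Matrix.cons_val_zero, Matrix.cons_val_one, Matrix.head_cons,
          ContinuousLinearMap.neg_apply, hinner]
        rw [show (-(ξ i)) * (-(ξ i)) = (ξ i)^2 by ring]
    _ = ((-(4*π^2) * ‖ξ‖^2 : ℝ)) • 𝓕 ⇑f ξ := by
        rw [← Finset.sum_smul, hsum, hc]
        simp only [Complex.real_smul, smul_eq_mul]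
        push_cast
        ring

end Fourier


section Main

lemma exists_solution (lam : ℝ) (hlam : 0 < lam) (φ : SchwartzMap (EuclideanSpace ℝ (Fin d)) ℝ) :
    ∃ ψ : SchwartzMap (EuclideanSpace ℝ (Fin d)) ℝ,
      ∀ x, laplacianE (⇑ψ) x = lam * ψ x + φ x := by
  set φc : SchwartzMap (EuclideanSpace ℝ (Fin d)) ℂ := compL Complex.ofRealCLM φ with hφc
  set w : SchwartzMap (EuclideanSpace ℝ (Fin d)) ℂ := fourierTransformCLM ℝ φc with hw
  have hm := hasTemperateGrowth_inv_quadratic (V := EuclideanSpace ℝ (Fin d)) lam hlam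
  set B : ℂ →L[ℝ] ℝ →L[ℝ] ℂ :=
    -((ContinuousLinearMap.lsmul ℝ ℝ : ℝ →L[ℝ] ℂ →L[ℝ] ℂ).flip) with hB
  set η : SchwartzMap (EuclideanSpace ℝ (Fin d)) ℂ := bilinLeftCLM B hm w with hη
  have hηx : ∀ x, η x = -(((((4*π^2) * ‖x‖^2 + lam)⁻¹ : ℝ)) • w x) := fun x => rfl
  set ψc : SchwartzMap (EuclideanSpace ℝ (Fin d)) ℂ := (FourierTransform.fourierCLE ℝ (SchwartzMap (EuclideanSpace ℝ (Fin d)) ℂ)).symm η with hψc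
  have hFψc : 𝓕 ⇑ψc = ⇑η := by
    have h1 : FourierTransform.fourierCLE ℝ (SchwartzMap (EuclideanSpace ℝ (Fin d)) ℂ) ψc = η := (FourierTransform.fourierCLE ℝ (SchwartzMap (EuclideanSpace ℝ (Fin d)) ℂ)).apply_symm_apply η
    rw [← SchwartzMap.fourier_coe, ← FourierTransform.fourierCLE_apply (R := ℝ) ψc, h1]
  have hkey : lapS ψc = lam • ψc + φc := by
    apply (FourierTransform.fourierCLE ℝ (SchwartzMap (EuclideanSpace ℝ (Fin d)) ℂ)).injective
    rw [map_add, _root_.map_smul]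
    ext ξ
    rw [SchwartzMap.add_apply, SchwartzMap.smul_apply]
    have e1 : ∀ g : SchwartzMap (EuclideanSpace ℝ (Fin d)) ℂ,
        (FourierTransform.fourierCLE ℝ (SchwartzMap (EuclideanSpace ℝ (Fin d)) ℂ) g) ξ = 𝓕 ⇑g ξ := fun g => by
      rw [FourierTransform.fourierCLE_apply, SchwartzMap.fourier_coe]
    rw [e1, e1, e1]
    rw [fourier_lapS ψc ξ, hFψc]
    have hwξ : 𝓕 ⇑φc ξ = w ξ := by rw [hw, fourierTransformCLM_apply, SchwartzMap.fourier_coe]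
    rw [hwξ, hηx ξ]
    have h0 : 0 < (4*π^2) * ‖ξ‖^2 + lam :=
      add_pos_of_nonneg_of_pos (by positivity) hlam
    have hminv : ((4*π^2) * ‖ξ‖^2 + lam) * ((4*π^2) * ‖ξ‖^2 + lam)⁻¹ = 1 :=
      mul_inv_cancel₀ h0.ne'
    rw [smul_neg, smul_neg, smul_smul, smul_smul, ← neg_smul, ← neg_smul]
    have hco : -((-(4*π^2) * ‖ξ‖^2) * ((4*π^2) * ‖ξ‖^2 + lam)⁻¹)
        = -(lam * ((4*π^2) * ‖ξ‖^2 + lam)⁻¹) + 1 := by linear_combination hminv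
    rw [hco, add_smul, one_smul]
  -- now take real parts
  refine ⟨compL Complex.reCLM ψc, fun x => ?_⟩
  have hiter : ∀ i : Fin d,
      iteratedFDeriv ℝ 2 (⇑(compL Complex.reCLM ψc)) x
        ![EuclideanSpace.single i 1, EuclideanSpace.single i 1]
      = Complex.reCLM (iteratedFDeriv ℝ 2 (⇑ψc) x
        ![EuclideanSpace.single i 1, EuclideanSpace.single i 1]) := by
    intro i
    have hfun : ⇑(compL Complex.reCLM ψc) = (⇑Complex.reCLM) ∘ (⇑ψc) := rfl
    rw [hfun, Complex.reCLM.iteratedFDeriv_comp_left (ψc.smooth 2).contDiffAt (by exact_mod_cast le_rfl)]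
    rfl
  have h1 : laplacianE (⇑(compL Complex.reCLM ψc)) x = Complex.re (lapS ψc x) := by
    rw [laplacianE, lapS_apply, Complex.re_sum]
    exact Finset.sum_congr rfl fun i _ => hiter i
  rw [h1, hkey]
  rw [SchwartzMap.add_apply, SchwartzMap.smul_apply]
  rw [Complex.add_re]
  have h2 : (lam • ψc x).re = lam * (compL Complex.reCLM ψc) x := by
    rw [Complex.real_smul, Complex.mul_re, Complex.ofReal_re, Complex.ofReal_im]
    show lam * (ψc x).re - 0 * (ψc x).im = lam * (ψc x).re
    ring
  have h3 : (φc x).re = φ x := rfl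
  rw [h2, h3]

end Main


end LapAux

/-- If a tempered distribution `u` on `ℝ^d` satisfies `u (Δ ψ) = λ · u ψ` for every Schwartz
function `ψ` and some `λ > 0`, then `u = 0`. -/
theorem stmt0 (d : ℕ) (hd : 1 ≤ d) (lam : ℝ) (hlam : 0 < lam)
    (u : SchwartzMap (EuclideanSpace ℝ (Fin d)) ℝ →L[ℝ] ℝ)
    (h : ∀ ψ φ : SchwartzMap (EuclideanSpace ℝ (Fin d)) ℝ,
      (∀ x, φ x = laplacianE (⇑ψ) x) → u φ = lam * u ψ) :
    u = 0 := by
  ext φ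
  simp only [ContinuousLinearMap.zero_apply]
  obtain ⟨ψ, hψ⟩ := LapAux.exists_solution lam hlam φ
  have harg : ∀ x, (lam • ψ + φ) x = laplacianE (⇑ψ) x := by
    intro x
    rw [SchwartzMap.add_apply, SchwartzMap.smul_apply, hψ x, smul_eq_mul]
  have h2 := h ψ (lam • ψ + φ) harg
  rw [map_add, _root_.map_smul, smul_eq_mul] at h2
  linarith
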